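/- Let A be a finite nonempty set, let f, Q, e : A → ℝ, and let η > 0. Let π = softmax(f) and π' = softmax(f + e + ηQ). Then Σ_{a∈A} Q(a) (π'(a) − π(a)) + (1/(4η)) · (max_{a∈A} |e(a)|)² ≥ 0. -/

import Mathlib

open Real Finset

-- key scalar inequality: log u ≥ 2(u-1)/(u+1) for u ≥ 1
lemma aux_log_ge (u : ℝ) (hu : 1 ≤ u) : 2 * (u - 1) / (u + 1) ≤ Real.log u := by
  set F : ℝ → ℝ := fun v => (v + 1) * Real.log v - 2 * (v - 1) with hF
  have hderiv : ∀ v : ℝ, 0 < v → HasDerivAt F (Real.log v + (1 + v⁻¹) - 2) v := by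
    intro v hv
    have h1 : HasDerivAt (fun v : ℝ => (v + 1) * Real.log v)
        (1 * Real.log v + (v + 1) * v⁻¹) v :=
      ((hasDerivAt_id v).add_const 1).mul (Real.hasDerivAt_log hv.ne')
    have h2 : HasDerivAt (fun v : ℝ => 2 * (v - 1)) 2 v := by
      simpa using ((hasDerivAt_id v).sub_const 1).const_mul 2
    convert h1.sub h2 using 1
    · rfl
    · rfl
    · rfl
    · rw [add_mul, mul_inv_cancel₀ hv.ne']; ring
  have hmono : MonotoneOn F (Set.Ici (1:ℝ)) := by
    apply monotoneOn_of_deriv_nonneg (convex_Ici 1)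
    · apply ContinuousOn.sub
      · exact (continuousOn_id.add continuousOn_const).mul
          (Real.continuousOn_log.mono (by intro x hx; simp at hx ⊢; linarith))
      · fun_prop
    · intro x hx
      rw [interior_Ici] at hx
      exact ((hderiv x (by linarith [hx.out])).differentiableAt).differentiableWithinAt
    · intro x hx
      rw [interior_Ici] at hx
      have hx1 : (1:ℝ) < x := hx
      rw [(hderiv x (by linarith)).deriv]
      have h1 : 1 - x⁻¹ ≤ Real.log x := Real.one_sub_inv_le_log_of_pos (by linarith)
      linarith
  have hF0 : F 1 = 0 := by simp [hF]
  have := hmono (Set.self_mem_Ici) (Set.mem_Ici.mpr hu) hu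
  rw [hF0] at this
  rw [div_le_iff₀ (by linarith : (0:ℝ) < u + 1)]
  simp only [hF] at this
  nlinarith [Real.log_nonneg hu]

-- general form: (x-y)(log x - log y) ≥ 2(x-y)²/(x+y) for x,y>0
lemma aux_prod_ge {x y : ℝ} (hx : 0 < x) (hy : 0 < y) :
    2 * (x - y) ^ 2 / (x + y) ≤ (x - y) * (Real.log x - Real.log y) := by
  rcases le_total y x with h | h
  · have hu : 1 ≤ x / y := (one_le_div hy).mpr h
    have := aux_log_ge (x / y) hu
    rw [← Real.log_div hx.ne' hy.ne']
    have hxy : 0 < x + y := by linarith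
    have heq : 2 * (x / y - 1) / (x / y + 1) = 2 * (x - y) / (x + y) := by
      rw [div_eq_div_iff (by positivity) hxy.ne']
      field_simp
    rw [heq] at this
    calc 2 * (x - y) ^ 2 / (x + y) = (x - y) * (2 * (x - y) / (x + y)) := by ring
    _ ≤ (x - y) * Real.log (x / y) := by
        apply mul_le_mul_of_nonneg_left this (by linarith)
  · have hu : 1 ≤ y / x := (one_le_div hx).mpr h
    have := aux_log_ge (y / x) hu
    have hlog : Real.log (y / x) = Real.log y - Real.log x := Real.log_div hy.ne' hx.ne'
    rw [hlog] at this
    have hxy : 0 < x + y := by linarith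
    have heq : 2 * (y / x - 1) / (y / x + 1) = 2 * (y - x) / (x + y) := by
      rw [div_eq_div_iff (by positivity) hxy.ne']
      field_simp
      ring_nf
    rw [heq] at this
    calc 2 * (x - y) ^ 2 / (x + y) = (y - x) * (2 * (y - x) / (x + y)) := by ring
    _ ≤ (y - x) * (Real.log y - Real.log x) := by
        apply mul_le_mul_of_nonneg_left this (by linarith)
    _ = (x - y) * (Real.log x - Real.log y) := by ring

/-- The soft-max distribution on a finite nonempty set associated with a score function `f`. -/
noncomputable def softmax {A : Type*} [Fintype A] (f : A → ℝ) : A → ℝ :=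
  fun a => Real.exp (f a) / ∑ a', Real.exp (f a')

lemma softmax_pos {A : Type*} [Fintype A] [Nonempty A] (f : A → ℝ) (a : A) :
    0 < softmax f a := by
  unfold softmax
  positivity

lemma softmax_sum {A : Type*} [Fintype A] [Nonempty A] (f : A → ℝ) :
    ∑ a, softmax f a = 1 := by
  unfold softmax
  rw [← Finset.sum_div, div_self]
  positivity

lemma softmax_log {A : Type*} [Fintype A] [Nonempty A] (f : A → ℝ) (a : A) :
    Real.log (softmax f a) = f a - Real.log (∑ a', Real.exp (f a')) := by
  unfold softmax
  rw [Real.log_div (Real.exp_ne_zero _) (by positivity), Real.log_exp]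

/-- For `π = softmax f` and `π' = softmax (f + e + η Q)` with `η > 0`,
`Σₐ Q(a) (π'(a) − π(a)) + (1/(4η)) (maxₐ |e(a)|)² ≥ 0`. -/
theorem stmt_5 {A : Type*} [Fintype A] [Nonempty A] (f Q e : A → ℝ) (η : ℝ) (hη : 0 < η) :
    0 ≤ (∑ a, Q a * (softmax (fun a => f a + e a + η * Q a) a - softmax f a))
        + 1 / (4 * η) * (Finset.univ.sup' Finset.univ_nonempty fun a => |e a|) ^ 2 := by
  set g : A → ℝ := fun a => f a + e a + η * Q a with hg
  set p : A → ℝ := softmax f with hp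
  set p' : A → ℝ := softmax g with hp'
  set M : ℝ := Finset.univ.sup' Finset.univ_nonempty fun a => |e a| with hM
  have hMe : ∀ a, |e a| ≤ M := fun a => Finset.le_sup' (fun a => |e a|) (Finset.mem_univ a)
  have hM0 : 0 ≤ M := le_trans (abs_nonneg _) (hMe (Classical.arbitrary A))
  set d : A → ℝ := fun a => p' a - p a with hd
  set t : ℝ := ∑ a, |d a| with ht
  have ht0 : 0 ≤ t := Finset.sum_nonneg fun a _ => abs_nonneg _
  have hsumd : ∑ a, d a = 0 := by
    simp only [hd, Finset.sum_sub_distrib, softmax_sum, sub_self, hp, hp']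
  -- Step 1: ∑ (e + ηQ) d = ∑ (log p' - log p) d
  have h1 : ∑ a, (Real.log (p' a) - Real.log (p a)) * d a
      = ∑ a, (e a + η * Q a) * d a := by
    have key : ∀ a, (Real.log (p' a) - Real.log (p a)) * d a
        = (e a + η * Q a) * d a
          - (Real.log (∑ a', Real.exp (g a')) - Real.log (∑ a', Real.exp (f a'))) * d a := by
      intro a
      rw [hp', hp, softmax_log, softmax_log]
      simp only [hg]
      ring
    rw [Finset.sum_congr rfl fun a _ => key a, Finset.sum_sub_distrib,
      ← Finset.mul_sum, hsumd, mul_zero, sub_zero]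
  -- Step 2: pointwise strong convexity
  have h2 : ∑ a, 2 * (d a) ^ 2 / (p' a + p a)
      ≤ ∑ a, (Real.log (p' a) - Real.log (p a)) * d a := by
    apply Finset.sum_le_sum
    intro a _
    have := aux_prod_ge (softmax_pos g a) (softmax_pos f a)
    simpa [hd, mul_comm] using this
  -- Step 3: Sedrakyan
  have h3 : t ^ 2 ≤ ∑ a, 2 * (d a) ^ 2 / (p' a + p a) := by
    have hpos : ∀ a ∈ Finset.univ, (0:ℝ) < (p' a + p a) / 2 := fun a _ => by
      have := softmax_pos g a; have := softmax_pos f a; positivity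
    have := Finset.sq_sum_div_le_sum_sq_div Finset.univ (fun a => |d a|)
      (g := fun a => (p' a + p a) / 2) hpos
    have hsum1 : ∑ a, (p' a + p a) / 2 = 1 := by
      rw [← Finset.sum_div, Finset.sum_add_distrib, softmax_sum, softmax_sum]
      norm_num
    rw [hsum1, div_one] at this
    calc t ^ 2 ≤ ∑ a, |d a| ^ 2 / ((p' a + p a) / 2) := this
    _ = ∑ a, 2 * (d a) ^ 2 / (p' a + p a) := by
        apply Finset.sum_congr rfl
        intro a _
        rw [sq_abs]
        rw [div_div_eq_mul_div]
        ring_nf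
  -- Step 4: ∑ e d ≤ M t
  have h4 : ∑ a, e a * d a ≤ M * t := by
    calc ∑ a, e a * d a ≤ ∑ a, |e a * d a| :=
          Finset.sum_le_sum fun a _ => le_abs_self _
    _ ≤ ∑ a, M * |d a| := by
        apply Finset.sum_le_sum
        intro a _
        rw [abs_mul]
        exact mul_le_mul_of_nonneg_right (hMe a) (abs_nonneg _)
    _ = M * t := by rw [ht, Finset.mul_sum]
  -- Combine
  have hsplit : ∑ a, (e a + η * Q a) * d a
      = ∑ a, e a * d a + η * ∑ a, Q a * d a := by
    rw [Finset.mul_sum, ← Finset.sum_add_distrib]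
    apply Finset.sum_congr rfl
    intro a _
    ring
  have h5 : -(M ^ 2 / 4) ≤ η * ∑ a, Q a * d a := by
    have hA : t ^ 2 ≤ ∑ a, (e a + η * Q a) * d a := by
      rw [← h1]; exact le_trans h3 h2
    nlinarith [sq_nonneg (t - M / 2)]
  have h6 : 0 ≤ η * ((∑ a, Q a * d a) + 1 / (4 * η) * M ^ 2) := by
    rw [mul_add]
    have : η * (1 / (4 * η) * M ^ 2) = M ^ 2 / 4 := by
      field_simp
    rw [this]
    linarith
  have h7 : 0 ≤ (∑ a, Q a * d a) + 1 / (4 * η) * M ^ 2 := by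
    by_contra hcon
    push_neg at hcon
    nlinarith
  simpa [hd] using h7
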